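/- Lemma 2.3 (recursion identity). With the notation of the recursive construction, assume 𝒱_j(0) ≠ 0 for j = 0,1,…,ℓ+1. Then for each ℓ ∈ ℕ ∪ {−1,0}, the identity 𝒬·Θ_λ Σ_ℓ = 𝒱·Σ_ℓ − 𝒰 + s^{ℓ+1}·F_{ℓ+1} holds as functions of s in a neighbourhood of 0. -/

import Mathlib

open Set Filter Topology

/-- The linear finite-difference operator `∇`:
`(∇f)(s) = (f(s) − f(0))/s` for `s ≠ 0` and `(∇f)(0) = f′(0)`. -/
noncomputable def nabla (f : ℝ → ℝ) : ℝ → ℝ :=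
  fun s => if s = 0 then deriv f 0 else (f s - f 0) / s

/-- The differential operator `Θ_λ = (1/λ)·s·∂_s`. -/
noncomputable def Theta (lam : ℝ) (f : ℝ → ℝ) : ℝ → ℝ :=
  fun s => (1 / lam) * s * deriv f s

/-- **Lemma 2.3 of the paper (recursion identity)**.  With `𝒬, 𝒱, 𝒰` analytic at `0`,
`λ > 0`, and the recursively defined data `𝒱_ℓ = 𝒱 − (ℓ/λ)𝒬`, `F₀ = 𝒰`,
`F_{ℓ+1} = 𝒱_ℓ·∇(F_ℓ/𝒱_ℓ)`, `c_ℓ = (F_ℓ/𝒱_ℓ)(0)`, `Σ_ℓ(s) = Σ_{j=0}^{ℓ} c_j s^j`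
(`Σ_{-1} = 0`), assuming `𝒱_j(0) ≠ 0` for `j = 0,…,ℓ+1`, one has
`𝒬·Θ_λ Σ_ℓ = 𝒱·Σ_ℓ − 𝒰 + s^{ℓ+1}·F_{ℓ+1}` near `s = 0`.
Here the statement is indexed by `n = ℓ + 1 ∈ ℕ`, so that `n = 0` is the case `ℓ = -1`. -/
theorem recursion_identity (Q V U : ℝ → ℝ) (lam : ℝ) (hlam : 0 < lam)
    (hQ : AnalyticAt ℝ Q 0) (hV : AnalyticAt ℝ V 0) (hU : AnalyticAt ℝ U 0)
    (Vl : ℕ → ℝ → ℝ) (hVl : ∀ l s, Vl l s = V s - (l / lam) * Q s)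
    (F : ℕ → ℝ → ℝ) (hF0 : F 0 = U)
    (hFs : ∀ l, F (l + 1) = fun s => Vl l s * nabla (fun t => F l t / Vl l t) s)
    (c : ℕ → ℝ) (hc : ∀ l, c l = F l 0 / Vl l 0)
    (n : ℕ) (hVl0 : ∀ j ≤ n, Vl j 0 ≠ 0) :
    ∀ᶠ s in 𝓝 (0 : ℝ),
      Q s * Theta lam (fun t => ∑ j ∈ Finset.range n, c j * t ^ j) s =
        V s * (∑ j ∈ Finset.range n, c j * s ^ j) - U s + s ^ n * F n s := by
  induction n with
  | zero =>
    filter_upwards with s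
    simp [Theta, hF0]
  | succ n ih =>
    have hVl0' : ∀ j ≤ n, Vl j 0 ≠ 0 := fun j hj => hVl0 j (hj.trans n.le_succ)
    have ih' := ih hVl0'
    have hVn0 : Vl n 0 ≠ 0 := hVl0 n n.le_succ
    have hVlfun : Vl n = fun s => V s - (n / lam) * Q s := funext (hVl n)
    have hcont : ContinuousAt (Vl n) 0 := by
      rw [hVlfun]
      exact hV.continuousAt.sub (continuousAt_const.mul hQ.continuousAt)
    have hne : ∀ᶠ s in 𝓝 (0:ℝ), Vl n s ≠ 0 := hcont.eventually_ne hVn0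
    have key : ∀ᶠ s in 𝓝 (0:ℝ), F n s - c n * Vl n s = s * F (n + 1) s := by
      filter_upwards [hne] with s hs
      rcases eq_or_ne s 0 with rfl | hs0
      · rw [hFs]
        simp [hc, nabla, div_mul_cancel₀ _ hs]
      · rw [hFs]
        simp only [nabla, if_neg hs0, hc]
        field_simp
    filter_upwards [ih', key] with s hih hkey
    have hdiff : ∀ m, DifferentiableAt ℝ (fun t : ℝ => ∑ j ∈ Finset.range m, c j * t ^ j) s :=
      fun m => DifferentiableAt.fun_sum fun j _ => (differentiableAt_pow j).const_mul _
    have hD : deriv (fun t => ∑ j ∈ Finset.range (n+1), c j * t ^ j) s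
        = deriv (fun t => ∑ j ∈ Finset.range n, c j * t ^ j) s + c n * ((n:ℝ) * s ^ (n-1)) := by
      have h1 : (fun t : ℝ => ∑ j ∈ Finset.range (n+1), c j * t ^ j)
          = fun t => (∑ j ∈ Finset.range n, c j * t ^ j) + c n * t ^ n := by
        funext t; rw [Finset.sum_range_succ]
      rw [h1, deriv_fun_add (hdiff n) ((differentiableAt_pow n).const_mul _),
        deriv_const_mul _ (differentiableAt_pow n), deriv_pow_field]
    have hsn : s * ((n:ℝ) * s ^ (n-1)) = (n:ℝ) * s ^ n := by
      cases n with
      | zero => simp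
      | succ m => simp [pow_succ]; ring
    simp only [Theta] at hih ⊢
    rw [hD, Finset.sum_range_succ]
    rw [hVl] at hkey
    linear_combination hih + s ^ n * hkey + (c n * Q s / lam) * hsn
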